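/- Let F be a torsion-free abelian group (an additive commutative group with no ℤ-torsion: for every integer n ≠ 0 and x ∈ F, n • x = 0 implies x = 0) such that the ℚ-vector space ℚ ⊗[ℤ] F is finite-dimensional, and let D = Module.finrank ℚ (ℚ ⊗[ℤ] F). Let ξ : F →+ F be an additive group homomorphism, a ∈ F, and define ρ : F → F by ρ(x) = ξ(x) + a. Suppose that for every x ∈ F there exists k with ρ^[k](x) = 0. Then for every x ∈ F, ρ^[D](x) = 0 and ξ^[D](x) = 0. -/

import Mathlib

open TensorProduct

/-- Dynamics of an affine recurrent map on a torsion-free abelian group of finite rational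
rank `D`: if `ρ(x) = ξ(x) + a` is such that every orbit reaches `0`, then the `D`-th
iterates of `ρ` and of `ξ` are identically `0`. -/
theorem affine_recurrent_map_vanishes (F : Type*) [AddCommGroup F]
    (htf : ∀ m : ℤ, m ≠ 0 → ∀ x : F, m • x = 0 → x = 0)
    [Module.Finite ℚ (ℚ ⊗[ℤ] F)]
    (ξ : F →+ F) (a : F) (ρ : F → F) (hρ : ∀ x : F, ρ x = ξ x + a)
    (hrec : ∀ x : F, ∃ k : ℕ, ρ^[k] x = 0) :
    ∀ x : F, ρ^[Module.finrank ℚ (ℚ ⊗[ℤ] F)] x = 0 ∧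
      (⇑ξ)^[Module.finrank ℚ (ℚ ⊗[ℤ] F)] x = 0 := by
  classical
  have hξ0 : ξ (0 : F) = 0 := map_zero ξ
  have hξit0 : ∀ n : ℕ, (⇑ξ)^[n] (0 : F) = 0 := fun n => Function.iterate_fixed hξ0 n
  -- key identity: ρ^[n] x = ξ^[n] x + ρ^[n] 0
  have key : ∀ (n : ℕ) (x : F), ρ^[n] x = (⇑ξ)^[n] x + ρ^[n] 0 := by
    intro n
    induction n with
    | zero => intro x; simp
    | succ n ih =>
      intro x
      rw [Function.iterate_succ_apply', Function.iterate_succ_apply',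
        Function.iterate_succ_apply', ih x, hρ, hρ (ρ^[n] 0), map_add]
      abel
  -- 0 is periodic with period m ≥ 1
  obtain ⟨k₀, hk₀⟩ := hrec (ρ 0)
  set m : ℕ := k₀ + 1 with hm
  have hm0 : ρ^[m] 0 = 0 := by
    rw [hm, Function.iterate_succ_apply]; exact hk₀
  have hmul0 : ∀ t : ℕ, ρ^[t * m] 0 = 0 := by
    intro t
    induction t with
    | zero => simp
    | succ t ih =>
      have : (t + 1) * m = t * m + m := by ring
      rw [this, Function.iterate_add_apply, hm0, ih]
  have hρ0 : ρ 0 = a := by rw [hρ, hξ0, zero_add]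
  -- ξ^[m] a = a
  have hfix : (⇑ξ)^[m] a = a := by
    have h1 : ρ^[m] a = a := by
      calc ρ^[m] a = ρ^[m] (ρ 0) := by rw [hρ0]
        _ = ρ^[m + 1] (0 : F) := (Function.iterate_succ_apply ρ m 0).symm
        _ = ρ (ρ^[m] 0) := by rw [Function.iterate_succ_apply']
        _ = a := by rw [hm0, hρ0]
    have h2 := key m a
    rw [hm0, add_zero] at h2
    rw [← h2, h1]
  have hfixt : ∀ t : ℕ, (⇑ξ)^[t * m] a = a := by
    intro t
    induction t with
    | zero => simp
    | succ t ih =>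
      have : (t + 1) * m = t * m + m := by ring
      rw [this, Function.iterate_add_apply, hfix, ih]
  -- every natural multiple of a lies in the finite cycle of 0, hence a = 0
  have hcycle : ∀ j : ℕ, ∃ r : Fin m, j • a = ρ^[(r : ℕ)] 0 := by
    intro j
    set d : F := j • a with hd
    have hfd : ∀ t : ℕ, (⇑ξ)^[t * m] d = d := by
      intro t
      have : (⇑ξ)^[t * m] d = j • ((⇑ξ)^[t * m] a) := by
        rw [hd]
        induction (t * m) with
        | zero => simp
        | succ n ih => rw [Function.iterate_succ_apply', Function.iterate_succ_apply', ih,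
            map_nsmul]
      rw [this, hfixt t]
    obtain ⟨k, hk⟩ := hrec d
    have hkm : k ≤ k * m := Nat.le_mul_of_pos_right k (Nat.succ_pos k₀)
    have h1 : ρ^[k * m] d = d := by
      rw [key (k * m) d, hfd k, hmul0 k, add_zero]
    have h2 : ρ^[k * m] d = ρ^[k * m - k] 0 := by
      have h : k * m = (k * m - k) + k := (Nat.sub_add_cancel hkm).symm
      conv_lhs => rw [h]
      rw [Function.iterate_add_apply, hk]
    set s : ℕ := k * m - k with hs
    have h3 : ρ^[s] (0 : F) = ρ^[s % m] 0 := by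
      conv_lhs => rw [← Nat.mod_add_div s m]
      rw [Function.iterate_add_apply]
      have : ρ^[m * (s / m)] (0 : F) = 0 := by
        rw [Nat.mul_comm]; exact hmul0 _
      rw [this]
    exact ⟨⟨s % m, Nat.mod_lt s (Nat.succ_pos k₀)⟩, (h1.symm.trans h2).trans h3⟩
  have ha : a = 0 := by
    have hcard : Fintype.card (Fin m) < Fintype.card (Fin (m + 1)) := by
      simp
    obtain ⟨i, j, hij, hfij⟩ := Fintype.exists_ne_map_eq_of_card_lt
      (fun j : Fin (m + 1) => (hcycle (j : ℕ)).choose) hcard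
    have h1 : (i : ℕ) • a = (j : ℕ) • a := by
      rw [(hcycle (i : ℕ)).choose_spec, (hcycle (j : ℕ)).choose_spec, hfij]
    have h2 : ((i : ℕ) - (j : ℕ) : ℤ) • a = 0 := by
      rw [sub_smul, natCast_zsmul, natCast_zsmul, h1, sub_self]
    have hne : ((i : ℕ) - (j : ℕ) : ℤ) ≠ 0 := by
      intro h
      apply hij
      have : ((i : ℕ) : ℤ) = ((j : ℕ) : ℤ) := by linarith [sub_eq_zero.mp h]
      exact Fin.ext (Nat.cast_injective this)
    exact htf _ hne a h2
  -- so ρ = ξ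
  have hρξ : ρ = ⇑ξ := funext fun x => by rw [hρ, ha, add_zero]
  have hrecξ : ∀ x : F, ∃ k : ℕ, (⇑ξ)^[k] x = 0 := by
    intro x; obtain ⟨k, hk⟩ := hrec x; exact ⟨k, by rwa [hρξ] at hk⟩
  -- pass to ℚ ⊗ F
  set D : ℕ := Module.finrank ℚ (ℚ ⊗[ℤ] F) with hD
  let ι : F →ₗ[ℤ] ℚ ⊗[ℤ] F := TensorProduct.mk ℤ ℚ F 1
  have hbc : IsBaseChange ℚ ι := TensorProduct.isBaseChange ℤ F ℚ
  have hloc : IsLocalizedModule (nonZeroDivisors ℤ) ι :=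
    (isLocalizedModule_iff_isBaseChange (nonZeroDivisors ℤ) ℚ ι).mpr hbc
  have hιz : ∀ x : F, ι x = 0 → x = 0 := by
    intro x hx
    obtain ⟨s, hs⟩ := (IsLocalizedModule.eq_zero_iff (nonZeroDivisors ℤ) ι).mp hx
    exact htf (s : ℤ) (nonZeroDivisors.coe_ne_zero s) x (by
      rwa [Submonoid.smul_def] at hs)
  let ξV : Module.End ℚ (ℚ ⊗[ℤ] F) := LinearMap.baseChange ℚ ξ.toIntLinearMap
  have hcomm : ∀ x : F, ξV (ι x) = ι (ξ x) := by
    intro x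
    simp [ξV, ι, TensorProduct.mk_apply, LinearMap.baseChange_tmul]
    exact LinearMap.baseChange_tmul ξ.toIntLinearMap (1 : ℚ) x
  have hpow : ∀ (n : ℕ) (x : F), (ξV ^ n) (ι x) = ι ((⇑ξ)^[n] x) := by
    intro n
    induction n with
    | zero => intro x; simp
    | succ n ih =>
      intro x
      rw [pow_succ, Module.End.mul_apply, hcomm, ih, Function.iterate_succ_apply]
  -- conclude
  intro x
  obtain ⟨k, hk⟩ := hrecξ x
  set N : ℕ := max k D with hN
  have hkN : k ≤ N := le_max_left _ _
  have hDN : D ≤ N := le_max_right _ _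
  have hNx : (⇑ξ)^[N] x = 0 := by
    have : N = (N - k) + k := (Nat.sub_add_cancel hkN).symm
    rw [this, Function.iterate_add_apply, hk, hξit0]
  have hker : ι x ∈ LinearMap.ker (ξV ^ N) := by
    rw [LinearMap.mem_ker, hpow, hNx, map_zero]
  have hkerD : ι x ∈ LinearMap.ker (ξV ^ D) := by
    rwa [Module.End.ker_pow_eq_ker_pow_finrank_of_le (hD ▸ hDN)] at hker
  have hfin : (⇑ξ)^[D] x = 0 := by
    apply hιz
    rw [← hpow]
    exact hkerD
  exact ⟨by rw [hρξ]; exact hfin, hfin⟩
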